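/- Let P be a Hermitian complex d×d matrix. The linear map T : X ↦ P·X·P on d×d complex matrices is idempotent under composition (T∘T = T, i.e., P·(P·X·P)·P = P·X·P for every X) if and only if P² = P or P² = −P. In particular, every orthogonal projector P yields a repeatable transformation X ↦ P·X·P. -/

import Mathlib

open Matrix

/-- For Hermitian `P`, the transformation `X ↦ P·X·P` is repeatable
(`P·(P·X·P)·P = P·X·P` for every `X`) iff `P² = P` or `P² = −P`.
In particular every orthogonal projector yields a repeatable transformation. -/
private lemma sandwich_entry {d : ℕ} (A B : Matrix (Fin d) (Fin d) ℂ) (b i a j : Fin d) :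
    (A * Matrix.single b i 1 * B : Matrix (Fin d) (Fin d) ℂ) a j = A a b * B i j := by
  rw [mul_assoc, mul_apply, Finset.sum_eq_single b]
  · simp
  · intro x _ hx
    rw [single_mul_apply_of_ne (h := hx), mul_zero]
  · simp

theorem sandwich_repeatable_iff (d : ℕ) (P : Matrix (Fin d) (Fin d) ℂ)
    (hP : Pᴴ = P) :
    (∀ X : Matrix (Fin d) (Fin d) ℂ, P * (P * X * P) * P = P * X * P) ↔
      (P * P = P ∨ P * P = -P) := by
  constructor
  · intro h
    have key : ∀ a b i j, (P * P) a b * (P * P) i j = P a b * P i j := by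
      intro a b i j
      have h1 := h (Matrix.single b i 1)
      have h2 : (P * (P * Matrix.single b i 1 * P) * P : Matrix (Fin d) (Fin d) ℂ) a j =
          (P * Matrix.single b i 1 * P : Matrix (Fin d) (Fin d) ℂ) a j := by rw [h1]
      have e1 : (P * Matrix.single b i 1 * P : Matrix (Fin d) (Fin d) ℂ) a j = P a b * P i j :=
        sandwich_entry P P b i a j
      have e2 : (P * (P * Matrix.single b i 1 * P) * P : Matrix (Fin d) (Fin d) ℂ) a j =
          (P * P) a b * (P * P) i j := by
        have : P * (P * Matrix.single b i 1 * P) * P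
            = (P * P) * Matrix.single b i 1 * (P * P) := by
          simp only [mul_assoc]
        rw [this]
        exact sandwich_entry (P * P) (P * P) b i a j
      rw [← e1, ← e2, h2]
    by_cases hp0 : P = 0
    · left; simp [hp0]
    · have : ∃ c e, P c e ≠ 0 := by
        by_contra hc
        push_neg at hc
        exact hp0 (by ext a b; simpa using hc a b)
      obtain ⟨c, e, hce⟩ := this
      have hq : (P * P) c e * (P * P) c e = P c e * P c e := key c e c e
      have := mul_self_eq_mul_self_iff.mp hq
      rcases this with hqe | hqe
      · left
        ext a b
        have := key a b c e
        rw [hqe] at this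
        exact mul_right_cancel₀ hce this
      · right
        ext a b
        have := key a b c e
        rw [hqe] at this
        have h3 : (P * P) a b * P c e = (-P a b) * P c e := by linear_combination (-1 : ℂ) * this
        simpa using mul_right_cancel₀ hce h3
  · intro h X
    rcases h with h | h
    · calc P * (P * X * P) * P = (P * P) * X * (P * P) := by simp only [mul_assoc]
        _ = P * X * P := by rw [h]
    · calc P * (P * X * P) * P = (P * P) * X * (P * P) := by simp only [mul_assoc]
        _ = P * X * P := by rw [h]; simp [neg_mul, mul_neg]
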